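/- In the Bullshark commit rule, if an anchor vertex at round 2k is committed by some honest member (gathered f+1 votes in round 2k+1), then every honest member that later commits an anchor at a higher round will have that earlier anchor in the causal history of its committed anchor; consequently all honest members commit anchors in the same order. (Abstract version: if every quorum of 2f+1 round-(2k+1) vertices intersects the f+1 voters of a committed anchor, then any anchor committed at round 2k+2 or later causally references the round-2k committed anchor.) -/
import Mathlib


/-- Bullshark commit rule (abstract): in a DAG whose round `2k+1` has at most
`3f+1` vertices, if an anchor gathered at least `f+1` round-`(2k+1)` voters and a
vertex `v` references at least `2f+1` round-`(2k+1)` vertices, then since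
`(f+1) + (2f+1) > 3f+1`, the anchor lies in the causal history of `v`. -/
theorem committed_anchor_in_causal_history
    {V : Type*} [Fintype V] [DecidableEq V]
    (f k : ℕ) (round : V → ℕ) (ref : V → Finset V)
    (hround_card : (Finset.univ.filter (fun u : V => round u = 2 * k + 1)).card ≤ 3 * f + 1)
    (anchor : V) (voters : Finset V)
    (hvoters_round : ∀ u ∈ voters, round u = 2 * k + 1)
    (hvoters_card : f + 1 ≤ voters.card)
    (hvote : ∀ u ∈ voters, anchor ∈ ref u)
    (v : V)
    (hv_refs : 2 * f + 1 ≤ ((ref v).filter (fun u => round u = 2 * k + 1)).card) :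
    Relation.ReflTransGen (fun a b => a ∈ ref b) anchor v := by
  set R := Finset.univ.filter (fun u : V => round u = 2 * k + 1) with hR
  have hvsub : voters ⊆ R := fun u hu =>
    Finset.mem_filter.mpr ⟨Finset.mem_univ u, hvoters_round u hu⟩
  have hrsub : (ref v).filter (fun u => round u = 2 * k + 1) ⊆ R := fun u hu =>
    Finset.mem_filter.mpr ⟨Finset.mem_univ u, (Finset.mem_filter.mp hu).2⟩
  have hinter : (voters ∩ (ref v).filter (fun u => round u = 2 * k + 1)).Nonempty := by
    rw [← Finset.card_pos]
    have := Finset.card_union_add_card_inter voters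
      ((ref v).filter (fun u => round u = 2 * k + 1))
    have hle : (voters ∪ (ref v).filter (fun u => round u = 2 * k + 1)).card ≤ 3 * f + 1 :=
      le_trans (Finset.card_le_card (Finset.union_subset hvsub hrsub)) hround_card
    omega
  obtain ⟨u, hu⟩ := hinter
  have hu1 := Finset.mem_inter.mp hu
  have h1 : anchor ∈ ref u := hvote u hu1.1
  have h2 : u ∈ ref v := (Finset.mem_filter.mp hu1.2).1
  exact Relation.ReflTransGen.head h1 (Relation.ReflTransGen.single h2)
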